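/- Greedy algorithm optimality: let V be submodular on a finite set Y with V(∅) = 0, f : Y → ℝ with distinct values ordered f(y_{σ(1)}) ≥ ... ≥ f(y_{σ(k)}). The measure μ defined by μ({y_{σ(i)}}) = V({y_{σ(1)},...,y_{σ(i)}}) − V({y_{σ(1)},...,y_{σ(i-1)}}) lies in the base polytope B(V) = { μ : μ(Y) = V(Y), μ(A) ≤ V(A) for all A ⊆ Y }. -/
import Mathlib


open Finset

/-- Greedy algorithm optimality: for a submodular `V` with `V ∅ = 0` and `f` sorted
in decreasing order along an enumeration `e : Fin k ≃ Y`, the vector of successive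
marginal gains `μ (e i) = V({e 0,…,e i}) − V({e 0,…,e (i-1)})` lies in the base
polytope `B(V)`. -/
theorem greedy_in_base_polytope (Y : Type*) [Fintype Y] [DecidableEq Y]
    (V : Finset Y → ℝ) (hV0 : V ∅ = 0)
    (hsub : ∀ A B : Finset Y, V (A ∩ B) + V (A ∪ B) ≤ V A + V B)
    (k : ℕ) (e : Fin k ≃ Y) (f : Y → ℝ)
    (hsorted : StrictAnti (fun i : Fin k => f (e i)))
    (μ : Y → ℝ)
    (hμ : ∀ i : Fin k,
      μ (e i) = V ((Finset.univ.filter (fun j : Fin k => j ≤ i)).image e)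
        - V ((Finset.univ.filter (fun j : Fin k => j < i)).image e)) :
    (∑ y : Y, μ y) = V Finset.univ ∧ ∀ A : Finset Y, (∑ y ∈ A, μ y) ≤ V A := by
  constructor
  · -- telescoping sum
    have hsum : (∑ y : Y, μ y) = ∑ i : Fin k, μ (e i) := (Equiv.sum_comp e μ).symm
    set g : ℕ → ℝ := fun n => V ((Finset.univ.filter (fun j : Fin k => (j : ℕ) < n)).image e)
      with hg
    have hstep : ∀ i : Fin k, μ (e i) = g ((i : ℕ) + 1) - g (i : ℕ) := by
      intro i
      have h1 : (Finset.univ.filter (fun j : Fin k => j ≤ i))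
          = (Finset.univ.filter (fun j : Fin k => (j : ℕ) < (i : ℕ) + 1)) := by
        ext j
        simp only [Finset.mem_filter, Finset.mem_univ, true_and, Fin.le_def]
        omega
      have h2 : (Finset.univ.filter (fun j : Fin k => j < i))
          = (Finset.univ.filter (fun j : Fin k => (j : ℕ) < (i : ℕ))) := by
        ext j
        simp only [Finset.mem_filter, Finset.mem_univ, true_and, Fin.lt_def]
      rw [hμ i, hg, h1, h2]
    rw [hsum]
    calc ∑ i : Fin k, μ (e i) = ∑ i : Fin k, (g ((i : ℕ) + 1) - g (i : ℕ)) := by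
          exact Finset.sum_congr rfl fun i _ => hstep i
      _ = ∑ n ∈ Finset.range k, (g (n + 1) - g n) := by
          exact Fin.sum_univ_eq_sum_range (fun n => g (n + 1) - g n) k
      _ = g k - g 0 := Finset.sum_range_sub g k
      _ = V Finset.univ := by
          have h0 : g 0 = 0 := by
            simp [hg, hV0]
          have hk : g k = V Finset.univ := by
            have : (Finset.univ.filter (fun j : Fin k => (j : ℕ) < k)) = Finset.univ := by
              apply Finset.filter_true_of_mem
              intro j _
              exact j.isLt
            rw [hg]
            simp only [this]
            congr 1
            apply Finset.eq_univ_iff_forall.mpr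
            intro y
            exact Finset.mem_image.mpr ⟨e.symm y, Finset.mem_univ _, e.apply_symm_apply y⟩
          rw [h0, hk, sub_zero]
  · intro A
    induction A using Finset.strongInduction with
    | _ A ih =>
      rcases A.eq_empty_or_nonempty with rfl | hA
      · simp [hV0]
      · have hBne : (A.image e.symm).Nonempty := hA.image _
        set i := (A.image e.symm).max' hBne with hi
        have hiA : e i ∈ A := by
          have hmem := (A.image e.symm).max'_mem hBne
          obtain ⟨y, hy, hey⟩ := Finset.mem_image.mp hmem
          rw [hi, ← hey, Equiv.apply_symm_apply]
          exact hy
        have hle : ∀ y ∈ A, e.symm y ≤ i := fun y hy =>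
          Finset.le_max' _ _ (Finset.mem_image_of_mem _ hy)
        set S := (Finset.univ.filter (fun j : Fin k => j ≤ i)).image e with hS
        set T := (Finset.univ.filter (fun j : Fin k => j < i)).image e with hT
        have hAS : A ⊆ S := by
          intro y hy
          rw [hS]
          exact Finset.mem_image.mpr ⟨e.symm y,
            Finset.mem_filter.mpr ⟨Finset.mem_univ _, hle y hy⟩, e.apply_symm_apply y⟩
        have hcap : A ∩ T = A.erase (e i) := by
          ext y
          simp only [Finset.mem_inter, Finset.mem_erase, hT, Finset.mem_image,
            Finset.mem_filter, Finset.mem_univ, true_and]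
          constructor
          · rintro ⟨hyA, j, hj, rfl⟩
            exact ⟨fun h => ne_of_lt hj (e.injective h), hyA⟩
          · rintro ⟨hne, hyA⟩
            refine ⟨hyA, e.symm y, ?_, e.apply_symm_apply y⟩
            exact lt_of_le_of_ne (hle y hyA) (fun h => hne (by rw [← h, e.apply_symm_apply]))
        have hcup : A ∪ T = S := by
          apply Finset.Subset.antisymm
          · apply Finset.union_subset hAS
            rw [hS, hT]
            apply Finset.image_subset_image
            intro j hj
            simp only [Finset.mem_filter, Finset.mem_univ, true_and] at hj ⊢
            exact le_of_lt hj
          · intro y hy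
            rw [hS] at hy
            obtain ⟨j, hj, rfl⟩ := Finset.mem_image.mp hy
            have hj' := (Finset.mem_filter.mp hj).2
            rcases lt_or_eq_of_le hj' with h | h
            · exact Finset.mem_union_right _ (Finset.mem_image.mpr
                ⟨j, Finset.mem_filter.mpr ⟨Finset.mem_univ _, h⟩, rfl⟩)
            · subst h; exact Finset.mem_union_left _ hiA
        have hkey := hsub A T
        rw [hcap, hcup] at hkey
        have hμi : μ (e i) = V S - V T := by rw [hμ i, hS, hT]
        have hsum : ∑ y ∈ A.erase (e i), μ y + μ (e i) = ∑ y ∈ A, μ y :=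
          Finset.sum_erase_add A μ hiA
        have hih := ih (A.erase (e i)) (Finset.erase_ssubset hiA)
        linarith
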